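/- Let q be an odd prime power. The polynomial f(x) = x + γ·Tr(x²) over F_{q²} (where Tr(x) = x + x^q) is a permutation of F_{q²} if and only if γ = 0. -/

import Mathlib

theorem stmt_12 (p m : ℕ) (hp : p.Prime) (hp2 : p ≠ 2) (hm : 0 < m)
    (F : Type*) [Field F] [Fintype F] (hF : Fintype.card F = (p ^ m) ^ 2)
    (γ : F) :
    Function.Bijective (fun x : F => x + γ * (x ^ 2 + (x ^ 2) ^ p ^ m)) ↔ γ = 0 := by
  -- characteristic of F is p
  have hcharF : CharP F p := by
    obtain ⟨n, hr, hcard⟩ := FiniteField.card F (ringChar F)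
    have hdvd : ringChar F ∣ (p ^ m) ^ 2 := by
      rw [← hF, hcard]; exact dvd_pow_self _ n.pos.ne'
    have : ringChar F ∣ p := hr.dvd_of_dvd_pow (hr.dvd_of_dvd_pow hdvd)
    have : ringChar F = p := (Nat.prime_dvd_prime_iff_eq hr hp).mp this
    rw [← this]; exact ringChar.charP F
  haveI := hcharF
  haveI : Fact p.Prime := ⟨hp⟩
  haveI : ExpChar F p := ExpChar.prime hp
  have h2 : (2 : F) ≠ 0 := by
    intro h
    have : (p : ℕ) ∣ 2 := by
      have := (CharP.cast_eq_zero_iff F p 2).mp (by exact_mod_cast h)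
      exact this
    exact hp2 ((Nat.prime_dvd_prime_iff_eq hp Nat.prime_two).mp this)
  have h2q : ∀ n : ℕ, (2 : F) ^ p ^ n = 2 := by
    intro n
    induction n with
    | zero => simp
    | succ k ih =>
      rw [pow_succ, pow_mul, ih]
      have : (2 : F) ^ p = frobenius F p 2 := rfl
      rw [this, map_ofNat]
  constructor
  · intro hbij
    by_contra hγ
    set y : F := (γ ^ 2 - 2⁻¹) / (2 * γ) with hy
    set x : F := y - γ with hxdef
    have key : γ ^ 2 - 2 * γ * y = 2⁻¹ := by
      field_simp [hy]
      rw [hy]; field_simp; ring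
    have hx2 : x ^ 2 = y ^ 2 + 2⁻¹ := by
      have : x ^ 2 = y ^ 2 + (γ ^ 2 - 2 * γ * y) := by rw [hxdef]; ring
      rw [this, key]
    have hq2 : (x ^ 2) ^ p ^ m = (y ^ 2) ^ p ^ m + 2⁻¹ := by
      rw [hx2, add_pow_char_pow, inv_pow, h2q]
    have hfeq : x + γ * (x ^ 2 + (x ^ 2) ^ p ^ m) = y + γ * (y ^ 2 + (y ^ 2) ^ p ^ m) := by
      rw [hq2, hx2, hxdef]
      have h1 : (2 : F) * 2⁻¹ = 1 := mul_inv_cancel₀ h2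
      linear_combination γ * h1
    have := hbij.injective hfeq
    rw [hxdef] at this
    exact hγ (sub_eq_self.mp this)
  · rintro rfl
    simp only [mul_zero, zero_mul, add_zero]
    exact Function.bijective_id
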